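/- Let (X, X̃) ∈ R^{2p} be a random vector. Pairwise exchangeability ((X,X̃)_{swap(j)} ≐ (X,X̃) for each j) holds if and only if both of the following hold for each j ∈ {1,...,p}: (1) conditional exchangeability: (X_j, X̃_j) and (X̃_j, X_j) have the same conditional distribution given (X_{-j}, X̃_{1:(j-1)}); and (2) knockoff symmetry: for any Borel set A, the conditional probability P((X_j, X̃_j) ∈ A | X_{-j}, X̃_{1:(j-1)}) is measurable with respect to the sigma-algebra generated by X_{(j+1):p} and the unordered pairs {X_1, X̃_1}, ..., {X_{j-1}, X̃_{j-1}}. -/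

import Mathlib

open MeasureTheory

variable {Ω : Type*} [MeasurableSpace Ω]

/-- Swap the `j`-th coordinates of a pair of vectors. -/
noncomputable def swapPair {p : ℕ} (j : Fin p) :
    ((Fin p → ℝ) × (Fin p → ℝ)) → ((Fin p → ℝ) × (Fin p → ℝ)) :=
  fun z => (Function.update z.1 j (z.2 j), Function.update z.2 j (z.1 j))

/-- The σ-algebra generated by `X₋ⱼ` (all coordinates of `X` except `j`) and
`X̃_{1:(j-1)}` (the knockoff coordinates with index `< j`). -/
def condAlg {p : ℕ} (X Xt : Ω → Fin p → ℝ) (j : Fin p) : MeasurableSpace Ω :=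
  MeasurableSpace.comap
    (fun ω => ((fun i : {i : Fin p // i ≠ j} => X ω i),
               (fun i : {i : Fin p // (i : Fin p) < j} => Xt ω i)))
    inferInstance

/-- The σ-algebra generated by `X_{(j+1):p}` and the unordered pairs
`{X_k, X̃_k}` for `k < j` (an unordered pair of reals is encoded by the pair
`(min, max)`). -/
def symAlg {p : ℕ} (X Xt : Ω → Fin p → ℝ) (j : Fin p) : MeasurableSpace Ω :=
  MeasurableSpace.comap
    (fun ω => ((fun i : {i : Fin p // j < i} => X ω i),
               (fun i : {i : Fin p // (i : Fin p) < j} =>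
                 (min (X ω i) (Xt ω i), max (X ω i) (Xt ω i)))))
    inferInstance

namespace KO
open Set Filter

/-- Factorization of a simple function measurable w.r.t. a comap σ-algebra. -/
theorem simpleFunc_factor {α β : Type*} [MeasurableSpace β] (S : α → β)
    (φ : @SimpleFunc α (MeasurableSpace.comap S inferInstance) ℝ) :
    ∃ t : β → ℝ, Measurable t ∧ ∀ a, t (S a) = φ a := by
  classical
  letI mα : MeasurableSpace α := MeasurableSpace.comap S inferInstance
  have h : ∀ c : ℝ, ∃ B : Set β, MeasurableSet B ∧ S ⁻¹' B = φ ⁻¹' {c} :=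
    fun c => MeasurableSpace.measurableSet_comap.mp (φ.measurableSet_fiber c)
  choose B hB hBeq using h
  refine ⟨fun x => ∑ c ∈ φ.range,
      Set.indicator (B c \ ⋃ c' ∈ φ.range.erase c, B c') (fun _ => c) x, ?_, ?_⟩
  · refine Finset.measurable_sum _ fun c _ => Measurable.indicator measurable_const ?_
    exact (hB c).diff (MeasurableSet.biUnion (φ.range.erase c).countable_toSet
      (fun c' _ => hB c'))
  · intro a
    dsimp only
    have hmem : ∀ c : ℝ, S a ∈ B c ↔ φ a = c := by
      intro c
      constructor
      · intro hc
        have : a ∈ S ⁻¹' B c := hc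
        rw [hBeq] at this; simpa using this
      · intro hc
        have : a ∈ φ ⁻¹' {c} := by simpa using hc
        rw [← hBeq] at this; exact this
    rw [Finset.sum_eq_single (φ a)]
    · rw [Set.indicator_of_mem]
      refine ⟨(hmem _).mpr rfl, ?_⟩
      simp only [Set.mem_iUnion, not_exists]
      intro c' hc' hmem'
      exact (Finset.ne_of_mem_erase hc') ((hmem c').mp hmem').symm
    · intro c _ hc
      rw [Set.indicator_of_notMem]
      intro hcmem
      exact hc ((hmem c).mp hcmem.1).symm
    · intro h
      exact absurd (φ.mem_range_self a) h

/-- Doob–Dynkin lemma for real-valued functions. -/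
theorem measurable_factor {α β : Type*} [MeasurableSpace β] (S : α → β) (f : α → ℝ)
    (hf : @Measurable α ℝ (MeasurableSpace.comap S inferInstance) _ f) :
    ∃ g : β → ℝ, Measurable g ∧ ∀ a, g (S a) = f a := by
  letI mα : MeasurableSpace α := MeasurableSpace.comap S inferInstance
  have hsm : StronglyMeasurable f := hf.stronglyMeasurable
  choose t ht htSa using fun n => simpleFunc_factor S (hsm.approx n)
  refine ⟨fun x => (liminf (fun n => ((t n x : ℝ) : EReal)) atTop).toReal, ?_, ?_⟩
  · apply measurable_ereal_toReal.comp
    exact Measurable.liminf (fun n => measurable_coe_real_ereal.comp (ht n))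
  · intro a
    dsimp only
    have h1 : Tendsto (fun n => t n (S a)) atTop (nhds (f a)) := by
      simpa [htSa] using hsm.tendsto_approx a
    have h2 : Tendsto (fun n => ((t n (S a) : ℝ) : EReal)) atTop (nhds ((f a : ℝ) : EReal)) :=
      (continuous_coe_real_ereal.tendsto _).comp h1
    rw [h2.liminf_eq]
    exact EReal.toReal_coe _

lemma measurable_dite_const {α β : Type*} [MeasurableSpace α] [MeasurableSpace β]
    (c : Prop) [Decidable c] {f : c → α → β} {g : ¬c → α → β}
    (hf : ∀ h, Measurable (f h)) (hg : ∀ h, Measurable (g h)) :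
    Measurable (fun a => if h : c then f h a else g h a) := by
  by_cases h : c
  · simpa [h] using hf h
  · simpa [h] using hg h

variable {p : ℕ}

abbrev EE (p : ℕ) := (Fin p → ℝ) × (Fin p → ℝ)
abbrev Wsp (p : ℕ) (j : Fin p) := ({i : Fin p // i ≠ j} → ℝ) × ({i : Fin p // i < j} → ℝ)
abbrev Ssp (p : ℕ) (j : Fin p) := ({i : Fin p // j < i} → ℝ) × ({i : Fin p // i < j} → ℝ × ℝ)

def wE (j : Fin p) : EE p → Wsp p j := fun z => (fun i => z.1 i.1, fun i => z.2 i.1)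
def vE (j : Fin p) : EE p → ℝ × ℝ := fun z => (z.1 j, z.2 j)
def sE (j : Fin p) : EE p → Ssp p j := fun z =>
  (fun i => z.1 i.1, fun i => (min (z.1 i.1) (z.2 i.1), max (z.1 i.1) (z.2 i.1)))
def piE (j : Fin p) : Wsp p j → Ssp p j := fun w =>
  (fun i => w.1 ⟨i.1, i.2.ne'⟩,
   fun i => (min (w.1 ⟨i.1, i.2.ne⟩) (w.2 i), max (w.1 ⟨i.1, i.2.ne⟩) (w.2 i)))
def tauE (j : Fin p) (S : Finset (Fin p)) : Wsp p j → Wsp p j := fun w =>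
  (fun i => if h : i.1 ∈ S ∧ i.1 < j then w.2 ⟨i.1, h.2⟩ else w.1 i,
   fun i => if i.1 ∈ S then w.1 ⟨i.1, i.2.ne⟩ else w.2 i)
def swapS (S : Finset (Fin p)) : EE p → EE p := fun z =>
  (fun i => if i ∈ S then z.2 i else z.1 i, fun i => if i ∈ S then z.1 i else z.2 i)
def rE (j : Fin p) (m : ℕ) : EE p → EE p := fun z =>
  (fun i => if i = j then 0 else z.1 i, fun i => if i.1 < m ∧ i ≠ j then z.2 i else 0)
def iotaW (j : Fin p) : Wsp p j → EE p := fun w =>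
  (fun i => if h : i = j then 0 else w.1 ⟨i, h⟩,
   fun i => if h : i < j then w.2 ⟨i, h⟩ else 0)
def sortW (j : Fin p) : Ssp p j → Wsp p j := fun s =>
  (fun i => if h : i.1 < j then (s.2 ⟨i.1, h⟩).1
      else s.1 ⟨i.1, lt_of_le_of_ne (not_lt.mp h) (Ne.symm i.2)⟩,
   fun i => (s.2 i).2)
def XiW (j m : Fin p) : (ℝ × ℝ) × EE p → Wsp p m := fun vr =>
  (fun i => if i.1 = j then vr.1.1 else vr.2.1 i.1,
   fun i => if i.1 = j then vr.1.2 else vr.2.2 i.1)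
def ThetaW (j m : Fin p) (hjm : j < m) : Wsp p m × (ℝ × ℝ) → (ℝ × ℝ) × EE p := fun wv =>
  ((wv.1.1 ⟨j, hjm.ne⟩, wv.1.2 ⟨j, hjm⟩),
   (fun i => if i = j then 0 else if h : i = m then wv.2.1 else wv.1.1 ⟨i, h⟩,
    fun i => if h : i.1 < m.1 + 1 ∧ i ≠ j then
        (if him : i = m then wv.2.2
         else wv.1.2 ⟨i, by
            have h2 : i.1 ≠ m.1 := fun hh => him (Fin.ext hh)
            rw [Fin.lt_def]; omega⟩)
      else 0))
def PsiW (j : Fin p) : (ℝ × ℝ) × EE p → EE p := fun vr =>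
  (Function.update vr.2.1 j vr.1.1, Function.update vr.2.2 j vr.1.2)

open Classical in
noncomputable def patt (j : Fin p) (w : Wsp p j) : Finset (Fin p) :=
  Finset.univ.filter (fun k => ∃ hk : k < j, w.2 ⟨k, hk⟩ < w.1 ⟨k, hk.ne⟩)

section Meas

lemma measurable_wE (j : Fin p) : Measurable (wE (p := p) j) :=
  Measurable.prodMk
    (measurable_pi_lambda _ fun i => (measurable_pi_apply i.1).comp measurable_fst)
    (measurable_pi_lambda _ fun i => (measurable_pi_apply i.1).comp measurable_snd)

lemma measurable_vE (j : Fin p) : Measurable (vE (p := p) j) :=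
  ((measurable_pi_apply j).comp measurable_fst).prodMk
    ((measurable_pi_apply j).comp measurable_snd)

lemma measurable_sE (j : Fin p) : Measurable (sE (p := p) j) := by
  refine Measurable.prodMk (measurable_pi_lambda _ fun i => (measurable_pi_apply i.1).comp measurable_fst) (measurable_pi_lambda _ fun i => Measurable.prodMk ?_ ?_)
  · exact ((measurable_pi_apply i.1).comp measurable_fst).min
      ((measurable_pi_apply i.1).comp measurable_snd)
  · exact ((measurable_pi_apply i.1).comp measurable_fst).max
      ((measurable_pi_apply i.1).comp measurable_snd)

lemma measurable_piE (j : Fin p) : Measurable (piE (p := p) j) := by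
  refine Measurable.prodMk (measurable_pi_lambda _ fun i => (measurable_pi_apply _).comp measurable_fst) (measurable_pi_lambda _ fun i => Measurable.prodMk ?_ ?_)
  · exact ((measurable_pi_apply _).comp measurable_fst).min
      ((measurable_pi_apply _).comp measurable_snd)
  · exact ((measurable_pi_apply _).comp measurable_fst).max
      ((measurable_pi_apply _).comp measurable_snd)

lemma measurable_tauE (j : Fin p) (S : Finset (Fin p)) : Measurable (tauE (p := p) j S) := by
  refine Measurable.prodMk (measurable_pi_lambda _ fun i => ?_)
    (measurable_pi_lambda _ fun i => ?_)
  · exact measurable_dite_const _ (fun h => (measurable_pi_apply _).comp measurable_snd)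
      (fun h => (measurable_pi_apply _).comp measurable_fst)
  · by_cases h : i.1 ∈ S
    · simpa [h, Function.comp_def] using (measurable_pi_apply _).comp (measurable_fst : Measurable (Prod.fst : Wsp p j → _))
    · simpa [h, Function.comp_def] using (measurable_pi_apply _).comp (measurable_snd : Measurable (Prod.snd : Wsp p j → _))

lemma measurable_swapS (S : Finset (Fin p)) : Measurable (swapS (p := p) S) := by
  refine Measurable.prodMk (measurable_pi_lambda _ fun i => ?_)
    (measurable_pi_lambda _ fun i => ?_) <;>
  · by_cases h : i ∈ S <;>
      simp only [h, if_false, if_true] <;>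
      first
        | exact (measurable_pi_apply _).comp measurable_fst
        | exact (measurable_pi_apply _).comp measurable_snd

lemma measurable_rE (j : Fin p) (m : ℕ) : Measurable (rE (p := p) j m) := by
  refine Measurable.prodMk (measurable_pi_lambda _ fun i => ?_)
    (measurable_pi_lambda _ fun i => ?_)
  · by_cases h : i = j
    · simpa [h] using measurable_const
    · simpa [h, Function.comp_def] using (measurable_pi_apply _).comp measurable_fst
  · by_cases h : i.1 < m ∧ i ≠ j
    · simpa [h, Function.comp_def] using (measurable_pi_apply _).comp measurable_snd
    · simpa [h] using measurable_const

lemma measurable_iotaW (j : Fin p) : Measurable (iotaW (p := p) j) := by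
  refine Measurable.prodMk (measurable_pi_lambda _ fun i => ?_)
    (measurable_pi_lambda _ fun i => ?_)
  · exact measurable_dite_const _ (fun h => measurable_const)
      (fun h => (measurable_pi_apply _).comp measurable_fst)
  · exact measurable_dite_const _ (fun h => (measurable_pi_apply _).comp measurable_snd)
      (fun h => measurable_const)

lemma measurable_sortW (j : Fin p) : Measurable (sortW (p := p) j) := by
  refine Measurable.prodMk (measurable_pi_lambda _ fun i => ?_)
    (measurable_pi_lambda _ fun i => measurable_snd.comp ((measurable_pi_apply _).comp measurable_snd))
  · exact measurable_dite_const _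
      (fun h => measurable_fst.comp ((measurable_pi_apply _).comp measurable_snd))
      (fun h => (measurable_pi_apply _).comp measurable_fst)

lemma measurable_XiW (j m : Fin p) : Measurable (XiW (p := p) j m) := by
  refine Measurable.prodMk (measurable_pi_lambda _ fun i => ?_)
    (measurable_pi_lambda _ fun i => ?_)
  · by_cases h : i.1 = j
    · simpa [h, Function.comp_def] using (measurable_fst.comp measurable_fst)
    · simpa [h, Function.comp_def] using (measurable_pi_apply _).comp (measurable_fst.comp measurable_snd)
  · by_cases h : i.1 = j
    · simpa [h, Function.comp_def] using (measurable_snd.comp measurable_fst)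
    · simpa [h, Function.comp_def] using (measurable_pi_apply _).comp (measurable_snd.comp measurable_snd)

lemma measurable_ThetaW (j m : Fin p) (hjm : j < m) : Measurable (ThetaW (p := p) j m hjm) := by
  refine Measurable.prodMk (Measurable.prodMk ((measurable_pi_apply _).comp (measurable_fst.comp measurable_fst)) ((measurable_pi_apply _).comp (measurable_snd.comp measurable_fst))) (Measurable.prodMk (measurable_pi_lambda _ fun i => ?_) (measurable_pi_lambda _ fun i => ?_))
  · by_cases h : i = j
    · simpa [h] using measurable_const
    · simp only [h, if_false]
      exact measurable_dite_const _ (fun h2 => measurable_fst.comp measurable_snd)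
        (fun h2 => (measurable_pi_apply _).comp (measurable_fst.comp measurable_fst))
  · refine measurable_dite_const _ (fun h => ?_) (fun h => measurable_const)
    exact measurable_dite_const _ (fun h2 => measurable_snd.comp measurable_snd)
      (fun h2 => (measurable_pi_apply _).comp (measurable_snd.comp measurable_fst))

lemma measurable_PsiW (j : Fin p) : Measurable (PsiW (p := p) j) := by
  refine Measurable.prodMk (measurable_pi_lambda _ fun i => ?_)
    (measurable_pi_lambda _ fun i => ?_) <;>
  · simp only [Function.update_apply]
    by_cases h : i = j <;>
      simp only [h, if_true, if_false] <;>
      first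
        | exact measurable_fst.comp measurable_fst
        | exact measurable_snd.comp measurable_fst
        | exact (measurable_pi_apply _).comp (measurable_fst.comp measurable_snd)
        | exact (measurable_pi_apply _).comp (measurable_snd.comp measurable_snd)

lemma measurable_swapPair (j : Fin p) : Measurable (swapPair (p := p) j) := by
  refine Measurable.prodMk (measurable_pi_lambda _ fun i => ?_)
    (measurable_pi_lambda _ fun i => ?_) <;>
  · simp only [Function.update_apply]
    by_cases h : i = j <;>
      simp only [h, if_true, if_false] <;>
      first
        | exact (measurable_pi_apply _).comp measurable_fst
        | exact (measurable_pi_apply _).comp measurable_snd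

end Meas

section Ids

variable {p : ℕ}

lemma sE_eq (j : Fin p) (z : EE p) : sE j z = piE j (wE j z) := rfl

lemma wE_swapPair (j : Fin p) (z : EE p) : wE j (swapPair j z) = wE j z := by
  unfold wE swapPair
  refine Prod.ext ?_ ?_ <;> funext i
  · exact Function.update_of_ne i.2 _ _
  · exact Function.update_of_ne i.2.ne _ _

lemma vE_swapPair (j : Fin p) (z : EE p) : vE j (swapPair j z) = Prod.swap (vE j z) := by
  unfold vE swapPair
  refine Prod.ext ?_ ?_ <;> simp [Function.update_self]

lemma swapS_empty : swapS (∅ : Finset (Fin p)) = id := by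
  funext z
  unfold swapS
  simp

lemma swapS_insert {k : Fin p} {S : Finset (Fin p)} (hk : k ∉ S) :
    swapS (insert k S) = swapPair k ∘ swapS S := by
  funext z
  unfold swapS swapPair
  refine Prod.ext ?_ ?_ <;> funext i <;> simp only [Function.comp_apply, Function.update_apply] <;>
    rcases eq_or_ne i k with rfl | hik
  · simp [hk]
  · simp [hik, Finset.mem_insert]
  · simp [hk]
  · simp [hik, Finset.mem_insert]

lemma wE_swapS {j : Fin p} {S : Finset (Fin p)} (hS : ∀ k ∈ S, k < j) (z : EE p) :
    wE j (swapS S z) = tauE j S (wE j z) := by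
  unfold wE swapS tauE
  refine Prod.ext ?_ ?_ <;> funext i
  · by_cases h : i.1 ∈ S
    · simp [h, hS i.1 h]
    · simp [h]
  · by_cases h : i.1 ∈ S <;> simp [h]

lemma vE_swapS {j : Fin p} {S : Finset (Fin p)} (hS : j ∉ S) (z : EE p) :
    vE j (swapS S z) = vE j z := by
  unfold vE swapS
  simp [hS]

lemma tauE_tauE (j : Fin p) (S : Finset (Fin p)) (w : Wsp p j) :
    tauE j S (tauE j S w) = w := by
  unfold tauE
  refine Prod.ext ?_ ?_ <;> funext i
  · by_cases h : i.1 ∈ S ∧ i.1 < j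
    · simp [h]
    · simp [h]
  · by_cases h : i.1 ∈ S
    · simp [h, i.2]
    · simp [h]

lemma piE_tauE (j : Fin p) (S : Finset (Fin p)) (w : Wsp p j) :
    piE j (tauE j S w) = piE j w := by
  unfold piE tauE
  refine Prod.ext ?_ ?_ <;> funext i <;> dsimp only
  · have hni : ¬ ((i.1 : Fin p) ∈ S ∧ (i.1 : Fin p) < j) := fun h => absurd i.2 (not_lt.mpr h.2.le)
    rw [dif_neg hni]
  · by_cases h : (i.1 : Fin p) ∈ S
    · rw [dif_pos (And.intro h i.2), if_pos h, min_comm, max_comm]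
    · rw [dif_neg (fun hc => h hc.1), if_neg h]

lemma rE_eq_iotaW (j : Fin p) (z : EE p) : rE j j.1 z = iotaW j (wE j z) := by
  unfold rE iotaW wE
  refine Prod.ext ?_ ?_ <;> funext i
  · by_cases h : i = j <;> simp [h]
  · by_cases h : i < j
    · have : i.1 < j.1 ∧ i ≠ j := ⟨h, h.ne⟩
      simp [this, h]
    · have : ¬ (i.1 < j.1 ∧ i ≠ j) := fun hc => h hc.1
      simp [this, h]

lemma patt_lt {j : Fin p} {w : Wsp p j} {k : Fin p} (hk : k ∈ patt j w) : k < j := by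
  classical
  unfold patt at hk
  rcases (Finset.mem_filter.mp hk).2 with ⟨h, _⟩
  exact h

lemma mem_patt {j : Fin p} {w : Wsp p j} {k : Fin p} (hk : k < j) :
    k ∈ patt j w ↔ w.2 ⟨k, hk⟩ < w.1 ⟨k, hk.ne⟩ := by
  classical
  unfold patt
  simp only [Finset.mem_filter, Finset.mem_univ, true_and]
  exact ⟨fun ⟨h, hx⟩ => hx, fun hx => ⟨hk, hx⟩⟩

lemma sortW_piE (j : Fin p) (w : Wsp p j) :
    sortW j (piE j w) = tauE j (patt j w) w := by
  unfold sortW piE tauE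
  refine Prod.ext ?_ ?_ <;> funext i
  · dsimp only
    by_cases h : i.1 < j
    · rw [dif_pos h]
      by_cases hp : i.1 ∈ patt j w
      · rw [dif_pos ⟨hp, h⟩]
        exact min_eq_right ((mem_patt h).mp hp).le
      · rw [dif_neg (fun hc => hp hc.1)]
        have : ¬ w.2 ⟨i.1, h⟩ < w.1 ⟨i.1, h.ne⟩ := fun hc => hp ((mem_patt h).mpr hc)
        exact min_eq_left (not_lt.mp this)
    · rw [dif_neg h]
      have : ¬ (i.1 ∈ patt j w ∧ i.1 < j) := fun hc => h hc.2
      rw [dif_neg this]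
  · dsimp only
    by_cases hp : i.1 ∈ patt j w
    · rw [if_pos hp]
      exact max_eq_left ((mem_patt i.2).mp hp).le
    · rw [if_neg hp]
      have : ¬ w.2 ⟨i.1, i.2⟩ < w.1 ⟨i.1, i.2.ne⟩ := fun hc => hp ((mem_patt i.2).mpr hc)
      exact max_eq_right (not_lt.mp this)

end Ids

section Ids2

variable {p : ℕ}

lemma XiW_eq {j m : Fin p} (hjm : j < m) (z : EE p) :
    XiW j m (vE j z, rE j m.1 z) = wE m z := by
  unfold XiW vE rE wE
  refine Prod.ext ?_ ?_ <;> funext i <;> dsimp only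
  · rcases eq_or_ne (i.1 : Fin p) j with h | h
    · rw [if_pos h, h]
    · rw [if_neg h, if_neg h]
  · rcases eq_or_ne (i.1 : Fin p) j with h | h
    · rw [if_pos h, h]
    · have : (i.1 : Fin p).1 < m.1 ∧ (i.1 : Fin p) ≠ j := ⟨i.2, h⟩
      rw [if_neg h, if_pos this]

lemma XiW_eq_swap {j m : Fin p} (hjm : j < m) (z : EE p) :
    XiW j m (Prod.swap (vE j z), rE j m.1 z) = tauE m {j} (wE m z) := by
  unfold XiW vE rE wE tauE
  refine Prod.ext ?_ ?_ <;> funext i <;> dsimp only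
  · rcases eq_or_ne (i.1 : Fin p) j with h | h
    · rw [if_pos h]
      have : (i.1 : Fin p) ∈ ({j} : Finset (Fin p)) ∧ (i.1 : Fin p) < m :=
        ⟨Finset.mem_singleton.mpr h, h ▸ hjm⟩
      rw [dif_pos this, h]
      rfl
    · rw [if_neg h, if_neg h]
      have : ¬ ((i.1 : Fin p) ∈ ({j} : Finset (Fin p)) ∧ (i.1 : Fin p) < m) :=
        fun hc => h (Finset.mem_singleton.mp hc.1)
      rw [dif_neg this]
  · rcases eq_or_ne (i.1 : Fin p) j with h | h
    · rw [if_pos h, if_pos (Finset.mem_singleton.mpr h), h]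
      rfl
    · have : (i.1 : Fin p).1 < m.1 ∧ (i.1 : Fin p) ≠ j := ⟨i.2, h⟩
      rw [if_neg h, if_pos this, if_neg (fun hc => h (Finset.mem_singleton.mp hc))]

lemma ThetaW_eq {j m : Fin p} (hjm : j < m) (z : EE p) :
    ThetaW j m hjm (wE m z, vE m z) = (vE j z, rE j (m.1 + 1) z) := by
  unfold ThetaW wE vE rE
  refine Prod.ext rfl (Prod.ext ?_ ?_) <;> funext i <;> dsimp only
  · rcases eq_or_ne i j with h | h
    · rw [if_pos h, if_pos h]
    · rw [if_neg h, if_neg h]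
      rcases eq_or_ne i m with h2 | h2
      · rw [dif_pos h2, h2]
      · rw [dif_neg h2]
  · by_cases h : i.1 < m.1 + 1 ∧ i ≠ j
    · rw [dif_pos h, if_pos h]
      rcases eq_or_ne i m with h2 | h2
      · rw [dif_pos h2, h2]
      · rw [dif_neg h2]
    · rw [dif_neg h, if_neg h]

lemma ThetaW_eq_swap {j m : Fin p} (hjm : j < m) (z : EE p) :
    ThetaW j m hjm (tauE m {j} (wE m z), vE m z) =
      (Prod.swap (vE j z), rE j (m.1 + 1) z) := by
  unfold ThetaW wE vE rE tauE
  refine Prod.ext (Prod.ext ?_ ?_) (Prod.ext ?_ ?_)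
  · dsimp only
    rw [dif_pos ⟨Finset.mem_singleton.mpr rfl, hjm⟩]
    rfl
  · dsimp only
    rw [if_pos (Finset.mem_singleton.mpr rfl)]
    rfl
  · funext i; dsimp only
    rcases eq_or_ne i j with h | h
    · rw [if_pos h, if_pos h]
    · rw [if_neg h, if_neg h]
      rcases eq_or_ne i m with h2 | h2
      · rw [dif_pos h2, h2]
      · rw [dif_neg h2]
        have : ¬ ((i : Fin p) ∈ ({j} : Finset (Fin p)) ∧ (i : Fin p) < m) :=
          fun hc => h (Finset.mem_singleton.mp hc.1)
        rw [dif_neg this]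
  · funext i; dsimp only
    by_cases h : i.1 < m.1 + 1 ∧ i ≠ j
    · rw [dif_pos h, if_pos h]
      rcases eq_or_ne i m with h2 | h2
      · rw [dif_pos h2, h2]
      · rw [dif_neg h2, if_neg (fun hc => h.2 (Finset.mem_singleton.mp hc))]
    · rw [dif_neg h, if_neg h]

lemma PsiW_eq (j : Fin p) (z : EE p) : PsiW j (vE j z, rE j p z) = z := by
  unfold PsiW vE rE
  refine Prod.ext ?_ ?_ <;> funext i <;> dsimp only <;>
    rw [Function.update_apply] <;> rcases eq_or_ne i j with h | h
  · rw [if_pos h, h]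
  · rw [if_neg h, if_neg h]
  · rw [if_pos h, h]
  · have : i.1 < p ∧ i ≠ j := ⟨i.2, h⟩
    rw [if_neg h, if_pos this]

lemma PsiW_eq_swap (j : Fin p) (z : EE p) :
    PsiW j (Prod.swap (vE j z), rE j p z) = swapPair j z := by
  unfold PsiW vE rE swapPair
  refine Prod.ext ?_ ?_ <;> funext i <;> dsimp only <;>
    rw [Function.update_apply, Function.update_apply] <;> rcases eq_or_ne i j with h | h
  · rw [if_pos h, if_pos h]; rfl
  · rw [if_neg h, if_neg h, if_neg h]
  · rw [if_pos h, if_pos h]; rfl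
  · have : i.1 < p ∧ i ≠ j := ⟨i.2, h⟩
    rw [if_neg h, if_neg h, if_pos this]

lemma rE_congr {j : Fin p} {m m' : ℕ}
    (h : ∀ i : Fin p, i ≠ j → (i.1 < m ↔ i.1 < m')) : rE j m = rE (p := p) j m' := by
  funext z
  unfold rE
  refine Prod.ext rfl ?_
  funext i
  dsimp only
  by_cases hi : i = j
  · have h1 : ¬ (i.1 < m ∧ i ≠ j) := fun hc => hc.2 hi
    have h2 : ¬ (i.1 < m' ∧ i ≠ j) := fun hc => hc.2 hi
    rw [if_neg h1, if_neg h2]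
  · by_cases hm : i.1 < m
    · rw [if_pos ⟨hm, hi⟩, if_pos ⟨(h i hi).mp hm, hi⟩]
    · have h2 : ¬ (i.1 < m' ∧ i ≠ j) := fun hc => hm ((h i hi).mpr hc.1)
      rw [if_neg (fun hc => hm hc.1), if_neg h2]

end Ids2

section MeasLayer

variable {Ω : Type*} [MeasurableSpace Ω] {p : ℕ}

/-- Two probability measures on a product space agreeing on rectangles are equal. -/
lemma measure_prod_ext {α β : Type*} [MeasurableSpace α] [MeasurableSpace β]
    {μ ν : Measure (α × β)} [IsProbabilityMeasure μ] [IsProbabilityMeasure ν]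
    (h : ∀ A B : Set _, MeasurableSet A → MeasurableSet B → μ (A ×ˢ B) = ν (A ×ˢ B)) :
    μ = ν := by
  refine ext_of_generate_finite _ generateFrom_prod.symm isPiSystem_prod ?_ ?_
  · rintro s ⟨A, hA, B, hB, rfl⟩
    exact h A B hA hB
  · simp

lemma map_pair_ext {γ δ : Type*} [MeasurableSpace γ] [MeasurableSpace δ]
    (μ : Measure Ω) [IsProbabilityMeasure μ]
    {F F' : Ω → γ} {G : Ω → δ} (hF : Measurable F) (hF' : Measurable F') (hG : Measurable G)
    (h : ∀ A B : Set _, MeasurableSet A → MeasurableSet B →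
      μ (F ⁻¹' A ∩ G ⁻¹' B) = μ (F' ⁻¹' A ∩ G ⁻¹' B)) :
    μ.map (fun ω => (F ω, G ω)) = μ.map (fun ω => (F' ω, G ω)) := by
  have h1 : Measurable fun ω => (F ω, G ω) := hF.prodMk hG
  have h2 : Measurable fun ω => (F' ω, G ω) := hF'.prodMk hG
  haveI : IsProbabilityMeasure (μ.map fun ω => (F ω, G ω)) :=
    Measure.isProbabilityMeasure_map h1.aemeasurable
  haveI : IsProbabilityMeasure (μ.map fun ω => (F' ω, G ω)) :=
    Measure.isProbabilityMeasure_map h2.aemeasurable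
  refine measure_prod_ext fun A B hA hB => ?_
  rw [Measure.map_apply h1 (hA.prod hB), Measure.map_apply h2 (hA.prod hB),
    Set.mk_preimage_prod, Set.mk_preimage_prod]
  exact h A B hA hB

variable (X Xt : Ω → Fin p → ℝ)

lemma condAlg_eq (j : Fin p) :
    condAlg X Xt j = MeasurableSpace.comap (fun ω => wE j (X ω, Xt ω)) inferInstance := rfl

lemma symAlg_eq (j : Fin p) :
    symAlg X Xt j = MeasurableSpace.comap (fun ω => sE j (X ω, Xt ω)) inferInstance := rfl

variable {X Xt}

/-- indicator helper -/
lemma fA_eq (A : Set (ℝ × ℝ)) (V : Ω → ℝ × ℝ) :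
    (fun ω => A.indicator (fun _ => (1 : ℝ)) (V ω)) = (V ⁻¹' A).indicator (fun _ => 1) := by
  funext ω
  by_cases h : V ω ∈ A <;> simp [h]

lemma integrable_fA (μ : Measure Ω) [IsFiniteMeasure μ]
    {A : Set (ℝ × ℝ)} (hA : MeasurableSet A) {V : Ω → ℝ × ℝ}
    (hV : Measurable V) :
    Integrable (fun ω => A.indicator (fun _ => (1 : ℝ)) (V ω)) μ := by
  rw [fA_eq]
  exact (integrable_const 1).indicator (hV hA)

lemma setIntegral_fA (μ : Measure Ω) [IsFiniteMeasure μ]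
    {A : Set (ℝ × ℝ)} (hA : MeasurableSet A) {V : Ω → ℝ × ℝ}
    (hV : Measurable V) {s : Set Ω} (hs : MeasurableSet s) :
    ∫ ω in s, A.indicator (fun _ => (1 : ℝ)) (V ω) ∂μ = (μ (V ⁻¹' A ∩ s)).toReal := by
  have : ∀ ω, A.indicator (fun _ => (1 : ℝ)) (V ω) = (V ⁻¹' A).indicator (fun _ => 1) ω := by
    intro ω; by_cases h : V ω ∈ A <;> simp [h]
  rw [integral_congr_ae (ae_of_all _ fun ω => this ω), setIntegral_indicator (hV hA),
    setIntegral_const, Set.inter_comm]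
  simp
  rfl


section fixedj

variable (hX : Measurable X) (hXt : Measurable Xt)
variable (μ : Measure Ω) [IsProbabilityMeasure μ] (j : Fin p)
include hX hXt

lemma hW_meas : Measurable (fun ω => wE j (X ω, Xt ω)) :=
  (measurable_wE j).comp (hX.prodMk hXt)

lemma hV_meas : Measurable (fun ω => vE j (X ω, Xt ω)) :=
  (measurable_vE j).comp (hX.prodMk hXt)

lemma hG_le : condAlg X Xt j ≤ ‹MeasurableSpace Ω› := by
  rw [condAlg_eq]
  exact (hW_meas hX hXt j).comap_le

/-- From equality of the two conditional expectations, equality of joint measures. -/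
lemma condexp_to_measure {A : Set (ℝ × ℝ)} (hA : MeasurableSet A)
    {V V' : Ω → ℝ × ℝ} (hV : Measurable V) (hV' : Measurable V')
    (h : μ[(fun ω => A.indicator (fun _ => (1 : ℝ)) (V ω)) | condAlg X Xt j]
        =ᵐ[μ] μ[(fun ω => A.indicator (fun _ => (1 : ℝ)) (V' ω)) | condAlg X Xt j])
    {B : Set (Wsp p j)} (hB : MeasurableSet B) :
    μ ((fun ω => wE j (X ω, Xt ω)) ⁻¹' B ∩ V ⁻¹' A) =
      μ ((fun ω => wE j (X ω, Xt ω)) ⁻¹' B ∩ V' ⁻¹' A) := by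
  have hWm := hW_meas hX hXt j
  have hGle := hG_le hX hXt j
  have hSG : MeasurableSet[condAlg X Xt j] ((fun ω => wE j (X ω, Xt ω)) ⁻¹' B) := by
    rw [condAlg_eq]; exact ⟨B, hB, rfl⟩
  have hS : MeasurableSet ((fun ω => wE j (X ω, Xt ω)) ⁻¹' B) := hWm hB
  have h1 : ∫ ω in (fun ω => wE j (X ω, Xt ω)) ⁻¹' B,
      A.indicator (fun _ => (1:ℝ)) (V ω) ∂μ
      = ∫ ω in (fun ω => wE j (X ω, Xt ω)) ⁻¹' B,
        A.indicator (fun _ => (1:ℝ)) (V' ω) ∂μ := by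
    rw [← setIntegral_condExp hGle (integrable_fA μ hA hV) hSG,
      ← setIntegral_condExp hGle (integrable_fA μ hA hV') hSG]
    exact setIntegral_congr_ae hS (h.mono fun ω hω _ => hω)
  rw [setIntegral_fA μ hA hV hS, setIntegral_fA μ hA hV' hS] at h1
  rw [Set.inter_comm ((fun ω => wE j (X ω, Xt ω)) ⁻¹' B),
    Set.inter_comm ((fun ω => wE j (X ω, Xt ω)) ⁻¹' B)]
  exact (ENNReal.toReal_eq_toReal_iff' (measure_ne_top μ _) (measure_ne_top μ _)).mp h1

/-- From equality of joint measures, equality of the two conditional expectations. -/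
lemma measure_to_condexp {A : Set (ℝ × ℝ)} (hA : MeasurableSet A)
    {V V' : Ω → ℝ × ℝ} (hV : Measurable V) (hV' : Measurable V')
    (h : ∀ B : Set (Wsp p j), MeasurableSet B →
      μ ((fun ω => wE j (X ω, Xt ω)) ⁻¹' B ∩ V ⁻¹' A) =
        μ ((fun ω => wE j (X ω, Xt ω)) ⁻¹' B ∩ V' ⁻¹' A)) :
    μ[(fun ω => A.indicator (fun _ => (1 : ℝ)) (V' ω)) | condAlg X Xt j]
        =ᵐ[μ] μ[(fun ω => A.indicator (fun _ => (1 : ℝ)) (V ω)) | condAlg X Xt j] := by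
  have hWm := hW_meas hX hXt j
  have hGle := hG_le hX hXt j
  refine ae_eq_condExp_of_forall_setIntegral_eq hGle (integrable_fA μ hA hV)
    (fun s _ _ => integrable_condExp.integrableOn) (fun s hs _ => ?_)
    (StronglyMeasurable.aestronglyMeasurable stronglyMeasurable_condExp)
  rw [condAlg_eq] at hs
  obtain ⟨B, hB, rfl⟩ := hs
  have hS : MeasurableSet ((fun ω => wE j (X ω, Xt ω)) ⁻¹' B) := hWm hB
  have hSG : MeasurableSet[condAlg X Xt j] ((fun ω => wE j (X ω, Xt ω)) ⁻¹' B) := by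
    rw [condAlg_eq]; exact ⟨B, hB, rfl⟩
  rw [setIntegral_condExp hGle (integrable_fA μ hA hV') hSG,
    setIntegral_fA μ hA hV hS, setIntegral_fA μ hA hV' hS]
  rw [Set.inter_comm (V' ⁻¹' A), Set.inter_comm (V ⁻¹' A)]
  exact (congrArg ENNReal.toReal (h B hB)).symm

end fixedj

end MeasLayer

section Hyp

variable {Ω : Type*} [MeasurableSpace Ω] {p : ℕ}
variable {X Xt : Ω → Fin p → ℝ}
variable (hX : Measurable X) (hXt : Measurable Xt)
variable (μ : Measure Ω) [IsProbabilityMeasure μ]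
include hX hXt

lemma map_swapS
    (hyp : ∀ j : Fin p, (μ.map (fun ω => (X ω, Xt ω))).map (swapPair j) =
      μ.map (fun ω => (X ω, Xt ω)))
    (S : Finset (Fin p)) :
    (μ.map (fun ω => (X ω, Xt ω))).map (swapS S) = μ.map (fun ω => (X ω, Xt ω)) := by
  classical
  induction S using Finset.induction_on with
  | empty => rw [swapS_empty, Measure.map_id]
  | @insert k S hk ih =>
    rw [swapS_insert hk, ← Measure.map_map (measurable_swapPair k) (measurable_swapS S), ih,
      hyp k]

lemma nu_preimage
    (hyp : ∀ j : Fin p, (μ.map (fun ω => (X ω, Xt ω))).map (swapPair j) =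
      μ.map (fun ω => (X ω, Xt ω)))
    (S : Finset (Fin p)) {C : Set (EE p)} (hC : MeasurableSet C) :
    μ ((fun ω => (X ω, Xt ω)) ⁻¹' (swapS S ⁻¹' C)) = μ ((fun ω => (X ω, Xt ω)) ⁻¹' C) := by
  have hZ : Measurable (fun ω => (X ω, Xt ω)) := hX.prodMk hXt
  have e1 : μ ((fun ω => (X ω, Xt ω)) ⁻¹' (swapS S ⁻¹' C)) =
      ((μ.map (fun ω => (X ω, Xt ω))).map (swapS S)) C := by
    rw [Measure.map_apply (measurable_swapS S) hC,
      Measure.map_apply hZ ((measurable_swapS S) hC)]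
  rw [e1, map_swapS hX hXt μ hyp S, Measure.map_apply hZ hC]

/-- Forward direction, part (1): conditional exchangeability. -/
lemma forward1
    (hyp : ∀ j : Fin p, (μ.map (fun ω => (X ω, Xt ω))).map (swapPair j) =
      μ.map (fun ω => (X ω, Xt ω)))
    (j : Fin p) {A : Set (ℝ × ℝ)} (hA : MeasurableSet A) :
    μ[(fun ω => A.indicator (fun _ => (1 : ℝ)) (vE j (X ω, Xt ω))) | condAlg X Xt j]
      =ᵐ[μ]
    μ[(fun ω => A.indicator (fun _ => (1 : ℝ)) (Prod.swap (vE j (X ω, Xt ω)))) | condAlg X Xt j] := by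
  have hZ : Measurable (fun ω => (X ω, Xt ω)) := hX.prodMk hXt
  have hV : Measurable (fun ω => vE j (X ω, Xt ω)) := hV_meas hX hXt j
  have hVs : Measurable (fun ω => Prod.swap (vE j (X ω, Xt ω))) := measurable_swap.comp hV
  refine measure_to_condexp hX hXt μ j hA hVs hV (fun B hB => ?_)
  -- goal : μ (W⁻¹B ∩ Vs⁻¹A) = μ (W⁻¹B ∩ V⁻¹A)
  have hset : swapPair j ⁻¹' (wE j ⁻¹' B ∩ vE j ⁻¹' A) =
      wE j ⁻¹' B ∩ (fun z => Prod.swap (vE j z)) ⁻¹' A := by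
    ext z
    simp only [Set.mem_preimage, Set.mem_inter_iff, wE_swapPair j z, vE_swapPair j z]
  have h0 : μ ((fun ω => (X ω, Xt ω)) ⁻¹' (swapPair j ⁻¹' (wE j ⁻¹' B ∩ vE j ⁻¹' A))) =
      μ ((fun ω => (X ω, Xt ω)) ⁻¹' (wE j ⁻¹' B ∩ vE j ⁻¹' A)) := by
    have hC : MeasurableSet (wE j ⁻¹' B ∩ vE j ⁻¹' A) :=
      ((measurable_wE j) hB).inter ((measurable_vE j) hA)
    have e1 : μ ((fun ω => (X ω, Xt ω)) ⁻¹' (swapPair j ⁻¹' (wE j ⁻¹' B ∩ vE j ⁻¹' A))) =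
        ((μ.map (fun ω => (X ω, Xt ω))).map (swapPair j)) (wE j ⁻¹' B ∩ vE j ⁻¹' A) := by
      rw [Measure.map_apply (measurable_swapPair j) hC,
        Measure.map_apply hZ ((measurable_swapPair j) hC)]
    rw [e1, hyp j, Measure.map_apply hZ hC]
  rw [hset] at h0
  rw [Set.preimage_inter, Set.preimage_inter] at h0
  exact h0

end Hyp

section Chain

variable {Ω : Type*} [MeasurableSpace Ω] {p : ℕ}
variable {X Xt : Ω → Fin p → ℝ}
variable (hX : Measurable X) (hXt : Measurable Xt)
variable (μ : Measure Ω) [IsProbabilityMeasure μ]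
include hX hXt

/-- Core step: if the conditional probability of `(X_m, X̃_m) ∈ A` given the `m`-th
conditioning σ-algebra is a.e. `symAlg`-measurable, and the law of `W_m` is invariant
under swapping the `j`-th pair inside `W_m` (`j < m`), then the joint law of
`(W_m, V_m)` is invariant under that swap. -/
lemma chain_step {j m : Fin p} (hjm : j < m) {A : Set (ℝ × ℝ)} (hA : MeasurableSet A)
    (h2 : AEStronglyMeasurable[symAlg X Xt m]
      (μ[(fun ω => A.indicator (fun _ => (1 : ℝ)) (vE m (X ω, Xt ω))) | condAlg X Xt m]) μ)
    (hlaw : μ.map (fun ω => tauE m {j} (wE m (X ω, Xt ω))) =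
      μ.map (fun ω => wE m (X ω, Xt ω)))
    {B : Set (Wsp p m)} (hB : MeasurableSet B) :
    μ ((fun ω => wE m (X ω, Xt ω)) ⁻¹' (tauE m {j} ⁻¹' B)
        ∩ (fun ω => vE m (X ω, Xt ω)) ⁻¹' A)
      = μ ((fun ω => wE m (X ω, Xt ω)) ⁻¹' B ∩ (fun ω => vE m (X ω, Xt ω)) ⁻¹' A) := by
  set W : Ω → Wsp p m := fun ω => wE m (X ω, Xt ω) with hWdef
  set V : Ω → ℝ × ℝ := fun ω => vE m (X ω, Xt ω) with hVdef
  set η : Ω → ℝ := μ[(fun ω => A.indicator (fun _ => (1 : ℝ)) (V ω)) | condAlg X Xt m] with hηdef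
  have hWm : Measurable W := hW_meas hX hXt m
  have hVm : Measurable V := hV_meas hX hXt m
  have hGle := hG_le hX hXt m
  have hτ : Measurable (tauE m ({j} : Finset (Fin p))) := measurable_tauE m {j}
  have hπ : Measurable (piE (p := p) m) := measurable_piE m
  -- extract the factorization of the conditional expectation through `sE`
  obtain ⟨g0, hg0sm, hg0ae⟩ := h2
  have hg0m : Measurable[symAlg X Xt m] g0 := hg0sm.measurable
  rw [symAlg_eq] at hg0m
  obtain ⟨g, hg, hgf⟩ := measurable_factor (fun ω => sE m (X ω, Xt ω)) g0 hg0m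
  have hae : η =ᵐ[μ] fun ω => g (piE m (W ω)) := by
    refine hg0ae.trans (ae_of_all _ fun ω => ?_)
    rw [← hgf ω]
    rfl
  have hfint : Integrable (fun ω => A.indicator (fun _ => (1 : ℝ)) (V ω)) μ :=
    integrable_fA μ hA hVm
  have hτB : MeasurableSet (tauE m ({j} : Finset (Fin p)) ⁻¹' B) := hτ hB
  have hS1 : MeasurableSet (W ⁻¹' (tauE m ({j} : Finset (Fin p)) ⁻¹' B)) := hWm hτB
  have hS2 : MeasurableSet (W ⁻¹' B) := hWm hB
  have hSG1 : MeasurableSet[condAlg X Xt m] (W ⁻¹' (tauE m ({j} : Finset (Fin p)) ⁻¹' B)) := by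
    rw [condAlg_eq]; exact ⟨_, hτB, rfl⟩
  have hSG2 : MeasurableSet[condAlg X Xt m] (W ⁻¹' B) := by
    rw [condAlg_eq]; exact ⟨_, hB, rfl⟩
  have hgπ : Measurable fun w : Wsp p m => g (piE m w) := hg.comp hπ
  have hmm : (μ.map W).map (tauE m ({j} : Finset (Fin p))) = μ.map W := by
    rw [Measure.map_map hτ hWm]
    exact hlaw
  have key : ∫ ω in W ⁻¹' (tauE m ({j} : Finset (Fin p)) ⁻¹' B),
      A.indicator (fun _ => (1 : ℝ)) (V ω) ∂μ
      = ∫ ω in W ⁻¹' B, A.indicator (fun _ => (1 : ℝ)) (V ω) ∂μ := by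
    calc ∫ ω in W ⁻¹' (tauE m ({j} : Finset (Fin p)) ⁻¹' B),
        A.indicator (fun _ => (1 : ℝ)) (V ω) ∂μ
        = ∫ ω in W ⁻¹' (tauE m ({j} : Finset (Fin p)) ⁻¹' B), η ω ∂μ :=
          (setIntegral_condExp hGle hfint hSG1).symm
      _ = ∫ ω in W ⁻¹' (tauE m ({j} : Finset (Fin p)) ⁻¹' B), g (piE m (W ω)) ∂μ :=
          setIntegral_congr_ae hS1 (hae.mono fun ω hω _ => hω)
      _ = ∫ w in tauE m ({j} : Finset (Fin p)) ⁻¹' B, g (piE m w) ∂(μ.map W) :=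
          (setIntegral_map hτB hgπ.aestronglyMeasurable hWm.aemeasurable).symm
      _ = ∫ w in tauE m ({j} : Finset (Fin p)) ⁻¹' B,
            g (piE m (tauE m ({j} : Finset (Fin p)) w)) ∂(μ.map W) := by
          refine setIntegral_congr_fun hτB fun w _ => ?_
          rw [piE_tauE]
      _ = ∫ w in B, g (piE m w) ∂((μ.map W).map (tauE m ({j} : Finset (Fin p)))) :=
          (setIntegral_map hB (by rw [hmm]; exact hgπ.aestronglyMeasurable)
            hτ.aemeasurable).symm
      _ = ∫ w in B, g (piE m w) ∂(μ.map W) := by rw [hmm]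
      _ = ∫ ω in W ⁻¹' B, g (piE m (W ω)) ∂μ :=
          setIntegral_map hB hgπ.aestronglyMeasurable hWm.aemeasurable
      _ = ∫ ω in W ⁻¹' B, η ω ∂μ :=
          (setIntegral_congr_ae hS2 (hae.mono fun ω hω _ => hω)).symm
      _ = ∫ ω in W ⁻¹' B, A.indicator (fun _ => (1 : ℝ)) (V ω) ∂μ :=
          setIntegral_condExp hGle hfint hSG2
  rw [setIntegral_fA μ hA hVm hS1, setIntegral_fA μ hA hVm hS2] at key
  rw [Set.inter_comm (W ⁻¹' (tauE m ({j} : Finset (Fin p)) ⁻¹' B)), Set.inter_comm (W ⁻¹' B)]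
  exact (ENNReal.toReal_eq_toReal_iff' (measure_ne_top μ _) (measure_ne_top μ _)).mp key

end Chain

section Backward

variable {Ω : Type*} [MeasurableSpace Ω] {p : ℕ}
variable {X Xt : Ω → Fin p → ℝ}
variable (hX : Measurable X) (hXt : Measurable Xt)
variable (μ : Measure Ω) [IsProbabilityMeasure μ]
include hX hXt

lemma backward (j : Fin p)
    (h1 : ∀ A : Set (ℝ × ℝ), MeasurableSet A →
      (μ[(fun ω => A.indicator (fun _ => (1 : ℝ)) (X ω j, Xt ω j)) | condAlg X Xt j]
        =ᵐ[μ]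
       μ[(fun ω => A.indicator (fun _ => (1 : ℝ)) (Xt ω j, X ω j)) | condAlg X Xt j]))
    (h2 : ∀ m : Fin p, ∀ A : Set (ℝ × ℝ), MeasurableSet A →
      AEStronglyMeasurable[symAlg X Xt m]
        (μ[(fun ω => A.indicator (fun _ => (1 : ℝ)) (X ω m, Xt ω m)) | condAlg X Xt m]) μ) :
    (μ.map (fun ω => (X ω, Xt ω))).map (swapPair j) = μ.map (fun ω => (X ω, Xt ω)) := by
  have hZ : Measurable (fun ω => (X ω, Xt ω)) := hX.prodMk hXt
  have hVj : Measurable (fun ω => vE j (X ω, Xt ω)) := hV_meas hX hXt j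
  have hVjs : Measurable (fun ω => Prod.swap (vE j (X ω, Xt ω))) := measurable_swap.comp hVj
  have hRm : ∀ m : ℕ, Measurable (fun ω => rE j m (X ω, Xt ω)) :=
    fun m => (measurable_rE j m).comp hZ
  -- the sequential induction
  have key : ∀ n : ℕ,
      μ.map (fun ω => (vE j (X ω, Xt ω), rE j (j.1 + n) (X ω, Xt ω))) =
      μ.map (fun ω => (Prod.swap (vE j (X ω, Xt ω)), rE j (j.1 + n) (X ω, Xt ω))) := by
    intro n
    induction n with
    | zero =>
      refine map_pair_ext μ hVj hVjs (hRm (j.1 + 0)) fun A B hA hB => ?_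
      have hfun : (fun ω => rE j (j.1 + 0) (X ω, Xt ω)) =
          fun ω => iotaW j (wE j (X ω, Xt ω)) :=
        funext fun ω => rE_eq_iotaW j (X ω, Xt ω)
      rw [hfun]
      have hpre : (fun ω => iotaW j (wE j (X ω, Xt ω))) ⁻¹' B =
          (fun ω => wE j (X ω, Xt ω)) ⁻¹' (iotaW j ⁻¹' B) := rfl
      rw [hpre]
      have hiB : MeasurableSet (iotaW j ⁻¹' B) := measurable_iotaW j hB
      have := condexp_to_measure hX hXt μ j hA hVj hVjs (h1 A hA) hiB
      rw [Set.inter_comm ((fun ω => wE j (X ω, Xt ω)) ⁻¹' (iotaW j ⁻¹' B)),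
        Set.inter_comm ((fun ω => wE j (X ω, Xt ω)) ⁻¹' (iotaW j ⁻¹' B))] at this
      exact this
    | succ n ih =>
      show μ.map (fun ω => (vE j (X ω, Xt ω), rE j (j.1 + n + 1) (X ω, Xt ω))) =
        μ.map (fun ω => (Prod.swap (vE j (X ω, Xt ω)), rE j (j.1 + n + 1) (X ω, Xt ω)))
      by_cases hmain : 0 < n ∧ j.1 + n < p
      · obtain ⟨hn, hmp⟩ := hmain
        set m : Fin p := ⟨j.1 + n, hmp⟩ with hm
        have hjm : j < m := by
          rw [Fin.lt_def]
          exact Nat.lt_add_of_pos_right hn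
        have hVm : Measurable (fun ω => vE m (X ω, Xt ω)) := hV_meas hX hXt m
        have hWmm : Measurable (fun ω => wE m (X ω, Xt ω)) := hW_meas hX hXt m
        have hτ : Measurable (tauE m ({j} : Finset (Fin p))) := measurable_tauE m {j}
        have hXi1 : (fun ω => XiW j m (vE j (X ω, Xt ω), rE j (j.1 + n) (X ω, Xt ω))) =
            fun ω => wE m (X ω, Xt ω) := funext fun ω => XiW_eq hjm (X ω, Xt ω)
        have hXi2 : (fun ω => XiW j m
              (Prod.swap (vE j (X ω, Xt ω)), rE j (j.1 + n) (X ω, Xt ω))) =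
            fun ω => tauE m {j} (wE m (X ω, Xt ω)) :=
          funext fun ω => XiW_eq_swap hjm (X ω, Xt ω)
        have hlaw : μ.map (fun ω => tauE m {j} (wE m (X ω, Xt ω))) =
            μ.map (fun ω => wE m (X ω, Xt ω)) := by
          rw [← hXi1, ← hXi2]
          calc μ.map (fun ω => XiW j m
                (Prod.swap (vE j (X ω, Xt ω)), rE j (j.1 + n) (X ω, Xt ω)))
              = (μ.map (fun ω =>
                  (Prod.swap (vE j (X ω, Xt ω)), rE j (j.1 + n) (X ω, Xt ω)))).map
                    (XiW j m) :=
                (Measure.map_map (measurable_XiW j m) (hVjs.prodMk (hRm (j.1 + n)))).symm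
            _ = (μ.map (fun ω =>
                  (vE j (X ω, Xt ω), rE j (j.1 + n) (X ω, Xt ω)))).map (XiW j m) := by
                rw [← ih]
            _ = μ.map (fun ω => XiW j m (vE j (X ω, Xt ω), rE j (j.1 + n) (X ω, Xt ω))) :=
                Measure.map_map (measurable_XiW j m) (hVj.prodMk (hRm (j.1 + n)))
        have hWV : μ.map (fun ω => (wE m (X ω, Xt ω), vE m (X ω, Xt ω))) =
            μ.map (fun ω => (tauE m {j} (wE m (X ω, Xt ω)), vE m (X ω, Xt ω))) := by
          refine map_pair_ext μ hWmm (hτ.comp hWmm) hVm fun B A hB hA => ?_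
          exact (chain_step hX hXt μ hjm hA (h2 m A hA) hlaw hB).symm
        have hTh1 : (fun ω => (vE j (X ω, Xt ω), rE j (j.1 + n + 1) (X ω, Xt ω))) =
            fun ω => ThetaW j m hjm (wE m (X ω, Xt ω), vE m (X ω, Xt ω)) :=
          funext fun ω => (ThetaW_eq hjm (X ω, Xt ω)).symm
        have hTh2 : (fun ω =>
              (Prod.swap (vE j (X ω, Xt ω)), rE j (j.1 + n + 1) (X ω, Xt ω))) =
            fun ω => ThetaW j m hjm (tauE m {j} (wE m (X ω, Xt ω)), vE m (X ω, Xt ω)) :=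
          funext fun ω => (ThetaW_eq_swap hjm (X ω, Xt ω)).symm
        rw [hTh1, hTh2]
        calc μ.map (fun ω => ThetaW j m hjm (wE m (X ω, Xt ω), vE m (X ω, Xt ω)))
            = (μ.map (fun ω => (wE m (X ω, Xt ω), vE m (X ω, Xt ω)))).map
                (ThetaW j m hjm) :=
              (Measure.map_map (measurable_ThetaW j m hjm) (hWmm.prodMk hVm)).symm
          _ = (μ.map (fun ω => (tauE m {j} (wE m (X ω, Xt ω)), vE m (X ω, Xt ω)))).map
                (ThetaW j m hjm) := by rw [hWV]
          _ = μ.map (fun ω =>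
                ThetaW j m hjm (tauE m {j} (wE m (X ω, Xt ω)), vE m (X ω, Xt ω))) :=
              Measure.map_map (measurable_ThetaW j m hjm) ((hτ.comp hWmm).prodMk hVm)
      · have hre : rE (p := p) j (j.1 + n + 1) = rE j (j.1 + n) := by
          refine rE_congr fun i hij => ?_
          have hii : i.1 ≠ j.1 := fun hh => hij (Fin.ext hh)
          have hip : i.1 < p := i.isLt
          have hjp : j.1 < p := j.isLt
          rcases Nat.eq_zero_or_pos n with h0 | hpos
          · subst h0; omega
          · have hp2 : p ≤ j.1 + n := le_of_not_gt (fun hc => hmain ⟨hpos, hc⟩)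
            omega
        rw [hre]
        exact ih
  -- instantiate at n = p - j.1
  have hsum : j.1 + (p - j.1) = p := by
    have := j.isLt
    omega
  have hp : μ.map (fun ω => (vE j (X ω, Xt ω), rE j p (X ω, Xt ω))) =
      μ.map (fun ω => (Prod.swap (vE j (X ω, Xt ω)), rE j p (X ω, Xt ω))) := by
    have := key (p - j.1)
    rwa [hsum] at this
  -- conclude
  have hPsi1 : (fun ω => PsiW j (vE j (X ω, Xt ω), rE j p (X ω, Xt ω))) =
      fun ω => (X ω, Xt ω) := funext fun ω => PsiW_eq j (X ω, Xt ω)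
  have hPsi2 : (fun ω => PsiW j (Prod.swap (vE j (X ω, Xt ω)), rE j p (X ω, Xt ω))) =
      fun ω => swapPair j (X ω, Xt ω) := funext fun ω => PsiW_eq_swap j (X ω, Xt ω)
  calc (μ.map (fun ω => (X ω, Xt ω))).map (swapPair j)
      = μ.map (fun ω => swapPair j (X ω, Xt ω)) := Measure.map_map (measurable_swapPair j) hZ
    _ = μ.map (fun ω => PsiW j (Prod.swap (vE j (X ω, Xt ω)), rE j p (X ω, Xt ω))) := by
        rw [hPsi2]
    _ = (μ.map (fun ω => (Prod.swap (vE j (X ω, Xt ω)), rE j p (X ω, Xt ω)))).map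
          (PsiW j) :=
        (Measure.map_map (measurable_PsiW j) (hVjs.prodMk (hRm p))).symm
    _ = (μ.map (fun ω => (vE j (X ω, Xt ω), rE j p (X ω, Xt ω)))).map (PsiW j) := by
        rw [← hp]
    _ = μ.map (fun ω => PsiW j (vE j (X ω, Xt ω), rE j p (X ω, Xt ω))) :=
        Measure.map_map (measurable_PsiW j) (hVj.prodMk (hRm p))
    _ = μ.map (fun ω => (X ω, Xt ω)) := by rw [hPsi1]

end Backward

section Forward2

variable {Ω : Type*} [MeasurableSpace Ω] {p : ℕ}
variable {X Xt : Ω → Fin p → ℝ}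
variable (hX : Measurable X) (hXt : Measurable Xt)
variable (μ : Measure Ω) [IsProbabilityMeasure μ]
include hX hXt

lemma forward2
    (hyp : ∀ j : Fin p, (μ.map (fun ω => (X ω, Xt ω))).map (swapPair j) =
      μ.map (fun ω => (X ω, Xt ω)))
    (j : Fin p) {A : Set (ℝ × ℝ)} (hA : MeasurableSet A) :
    AEStronglyMeasurable[symAlg X Xt j]
      (μ[(fun ω => A.indicator (fun _ => (1 : ℝ)) (vE j (X ω, Xt ω))) | condAlg X Xt j]) μ := by
  classical
  have hZ : Measurable fun ω => (X ω, Xt ω) := hX.prodMk hXt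
  set W : Ω → Wsp p j := fun ω => wE j (X ω, Xt ω) with hWdef
  set V : Ω → ℝ × ℝ := fun ω => vE j (X ω, Xt ω) with hVdef
  have hWm : Measurable W := hW_meas hX hXt j
  have hVm : Measurable V := hV_meas hX hXt j
  have hGle := hG_le hX hXt j
  set η : Ω → ℝ := μ[(fun ω => A.indicator (fun _ => (1 : ℝ)) (V ω)) | condAlg X Xt j]
    with hηdef
  have hηsm : StronglyMeasurable[condAlg X Xt j] η := stronglyMeasurable_condExp
  have hηmG : Measurable[MeasurableSpace.comap W inferInstance] η := by
    have := hηsm.measurable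
    rwa [condAlg_eq] at this
  obtain ⟨h, hh, hfac⟩ := measurable_factor W η hηmG
  have hηint : Integrable η μ := integrable_condExp
  have hηW : (fun ω => h (W ω)) = η := funext hfac
  have hfint : Integrable (fun ω => A.indicator (fun _ => (1 : ℝ)) (V ω)) μ :=
    integrable_fA μ hA hVm
  have hIntH : Integrable h (μ.map W) := by
    rw [integrable_map_measure hh.aestronglyMeasurable hWm.aemeasurable]
    show Integrable (fun ω => h (W ω)) μ
    rw [hηW]; exact hηint
  have claim : ∀ S : Finset (Fin p), (∀ k ∈ S, k < j) →
      ∀ᵐ w ∂(μ.map W), h (tauE j S w) = h w := by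
    intro S hS
    have hjS : j ∉ S := fun hc => lt_irrefl j (hS j hc)
    have hτ : Measurable (tauE j S) := measurable_tauE j S
    have hWinv : μ.map (fun ω => tauE j S (W ω)) = μ.map W := by
      have e1 : (fun ω => tauE j S (W ω)) = fun ω => wE j (swapS S (X ω, Xt ω)) :=
        funext fun ω => (wE_swapS hS (X ω, Xt ω)).symm
      rw [e1]
      calc μ.map (fun ω => wE j (swapS S (X ω, Xt ω)))
          = (μ.map (fun ω => swapS S (X ω, Xt ω))).map (wE j) :=
            (Measure.map_map (measurable_wE j) ((measurable_swapS S).comp hZ)).symm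
        _ = ((μ.map (fun ω => (X ω, Xt ω))).map (swapS S)).map (wE j) := by
            rw [Measure.map_map (measurable_swapS S) hZ]
            rfl
        _ = (μ.map (fun ω => (X ω, Xt ω))).map (wE j) := by
            rw [map_swapS hX hXt μ hyp S]
        _ = μ.map W := Measure.map_map (measurable_wE j) hZ
    have hmm2 : (μ.map W).map (tauE j S) = μ.map W := by
      rw [Measure.map_map hτ hWm]; exact hWinv
    have hIntτ : Integrable (h ∘ tauE j S) (μ.map W) := by
      have h9 : Integrable h ((μ.map W).map (tauE j S)) := by rw [hmm2]; exact hIntH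
      rwa [integrable_map_measure hh.aestronglyMeasurable hτ.aemeasurable] at h9
    have hIntξ : Integrable (fun ω => h (tauE j S (W ω))) μ := by
      have h9 := hIntτ
      rwa [integrable_map_measure (hh.comp hτ).aestronglyMeasurable hWm.aemeasurable] at h9
    have hξae : (fun ω => h (tauE j S (W ω))) =ᵐ[μ] η := by
      refine ae_eq_condExp_of_forall_setIntegral_eq hGle hfint
        (fun s _ _ => hIntξ.integrableOn) (fun s hs _ => ?_) ?_
      · rw [condAlg_eq] at hs
        obtain ⟨B, hB, rfl⟩ := hs
        have hτB : MeasurableSet (tauE j S ⁻¹' B) := hτ hB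
        calc ∫ ω in (fun ω => wE j (X ω, Xt ω)) ⁻¹' B, h (tauE j S (W ω)) ∂μ
            = ∫ w in B, h (tauE j S w) ∂(μ.map W) :=
              (setIntegral_map hB (hh.comp hτ).aestronglyMeasurable hWm.aemeasurable).symm
          _ = ∫ w in B, h (tauE j S w) ∂((μ.map W).map (tauE j S)) := by rw [hmm2]
          _ = ∫ w in tauE j S ⁻¹' B, h (tauE j S (tauE j S w)) ∂(μ.map W) :=
              setIntegral_map hB (by rw [hmm2]; exact (hh.comp hτ).aestronglyMeasurable)
                hτ.aemeasurable
          _ = ∫ w in tauE j S ⁻¹' B, h w ∂(μ.map W) := by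
              refine setIntegral_congr_fun hτB fun w _ => ?_
              rw [tauE_tauE]
          _ = ∫ ω in W ⁻¹' (tauE j S ⁻¹' B), h (W ω) ∂μ :=
              setIntegral_map hτB hh.aestronglyMeasurable hWm.aemeasurable
          _ = ∫ ω in W ⁻¹' (tauE j S ⁻¹' B), η ω ∂μ := by rw [← hηW]
          _ = ∫ ω in W ⁻¹' (tauE j S ⁻¹' B), A.indicator (fun _ => (1 : ℝ)) (V ω) ∂μ :=
              setIntegral_condExp hGle hfint (by rw [condAlg_eq]; exact ⟨_, hτB, rfl⟩)
          _ = (μ (V ⁻¹' A ∩ W ⁻¹' (tauE j S ⁻¹' B))).toReal :=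
              setIntegral_fA μ hA hVm (hWm hτB)
          _ = (μ (V ⁻¹' A ∩ W ⁻¹' B)).toReal := by
              have hC : MeasurableSet (wE j ⁻¹' B ∩ vE j ⁻¹' A) :=
                ((measurable_wE j) hB).inter ((measurable_vE j) hA)
              have h0 := nu_preimage hX hXt μ hyp S hC
              have hseteq : swapS S ⁻¹' (wE j ⁻¹' B ∩ vE j ⁻¹' A) =
                  (fun z => tauE j S (wE j z)) ⁻¹' B ∩ vE j ⁻¹' A := by
                ext z
                simp only [Set.mem_preimage, Set.mem_inter_iff, wE_swapS hS z, vE_swapS hjS z]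
              rw [hseteq, Set.preimage_inter, Set.preimage_inter] at h0
              rw [Set.inter_comm (V ⁻¹' A), Set.inter_comm (V ⁻¹' A)]
              exact congrArg ENNReal.toReal h0
          _ = ∫ ω in (fun ω => wE j (X ω, Xt ω)) ⁻¹' B,
                A.indicator (fun _ => (1 : ℝ)) (V ω) ∂μ :=
              (setIntegral_fA μ hA hVm (hWm hB)).symm
      · rw [condAlg_eq]
        exact ((hh.comp (hτ.comp
          (comap_measurable W))).stronglyMeasurable).aestronglyMeasurable
    have hae2 : ∀ᵐ ω ∂μ, h (tauE j S (W ω)) = h (W ω) := by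
      filter_upwards [hξae] with ω hω
      exact hω.trans (hfac ω).symm
    exact (ae_map_iff hWm.aemeasurable (measurableSet_eq_fun (hh.comp hτ) hh)).mpr hae2
  have hall : ∀ᵐ w ∂(μ.map W), ∀ S : Finset (Fin p), (∀ k ∈ S, k < j) →
      h (tauE j S w) = h w := by
    rw [ae_all_iff]
    intro S
    by_cases hS : ∀ k ∈ S, k < j
    · exact (claim S hS).mono fun w hw _ => hw
    · exact ae_of_all _ fun w hc => absurd hc hS
  have hker : ∀ᵐ w ∂(μ.map W), h (sortW j (piE j w)) = h w := by
    filter_upwards [hall] with w hw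
    rw [sortW_piE j w]
    exact hw (patt j w) (fun k hk => patt_lt hk)
  have hae3 : ∀ᵐ ω ∂μ, h (sortW j (piE j (W ω))) = h (W ω) :=
    ae_of_ae_map hWm.aemeasurable hker
  refine ⟨fun ω => h (sortW j (sE j (X ω, Xt ω))), ?_, ?_⟩
  · rw [symAlg_eq]
    exact ((hh.comp (measurable_sortW j)).comp
      (comap_measurable _)).stronglyMeasurable
  · filter_upwards [hae3] with ω hω
    rw [← hfac ω]
    exact hω.symm

end Forward2

end KO

/-- **Sequential characterization of knockoff distributions.**
Pairwise exchangeability of `(X, X̃)` holds if and only if, for every `j`: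
(1) conditional exchangeability of `(X_j, X̃_j)` given `(X₋ⱼ, X̃_{1:(j-1)})`, and
(2) knockoff symmetry: the conditional probability of `(X_j, X̃_j) ∈ A` given
`(X₋ⱼ, X̃_{1:(j-1)})` is (a.e.) measurable with respect to the σ-algebra
generated by `X_{(j+1):p}` and the unordered pairs `{X_k, X̃_k}`, `k < j`. -/
theorem stmt4 {p : ℕ} (μ : Measure Ω) [IsProbabilityMeasure μ]
    (X Xt : Ω → Fin p → ℝ) (hX : Measurable X) (hXt : Measurable Xt) :
    (∀ j : Fin p,
      (μ.map (fun ω => (X ω, Xt ω))).map (swapPair j) =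
        μ.map (fun ω => (X ω, Xt ω))) ↔
    ((∀ j : Fin p, ∀ A : Set (ℝ × ℝ), MeasurableSet A →
        (μ[(fun ω => A.indicator (fun _ => (1 : ℝ)) (X ω j, Xt ω j)) |
            condAlg X Xt j]
          =ᵐ[μ]
         μ[(fun ω => A.indicator (fun _ => (1 : ℝ)) (Xt ω j, X ω j)) |
            condAlg X Xt j])) ∧
     (∀ j : Fin p, ∀ A : Set (ℝ × ℝ), MeasurableSet A →
        AEStronglyMeasurable[symAlg X Xt j]
          (μ[(fun ω => A.indicator (fun _ => (1 : ℝ)) (X ω j, Xt ω j)) |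
              condAlg X Xt j]) μ)) := by
  constructor
  · intro hyp
    constructor
    · intro j A hA
      exact KO.forward1 hX hXt μ hyp j hA
    · intro j A hA
      exact KO.forward2 hX hXt μ hyp j hA
  · rintro ⟨h1, h2⟩ j
    exact KO.backward hX hXt μ j (h1 j) h2
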